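/- Let C = (1, c₂, ..., cₙ) with n ≥ 2 and suppose the subsystem (1, c₂, ..., c_{n-1}) is canonical. Then C is canonical if and only if opt_C(m·c_{n-1}) = grd_C(m·c_{n-1}), where m = ⌈cₙ / c_{n-1}⌉. -/
import Mathlib


open Finset

/-- `x` is a representation of value `v` in the coin system `c 1, …, c n`. -/
def IsRepr (n : ℕ) (c : ℕ → ℕ) (v : ℕ) (x : ℕ → ℕ) : Prop :=
  ∑ i ∈ Finset.Icc 1 n, c i * x i = v

/-- Minimum number of coins over all representations of `v`. -/
noncomputable def opt (n : ℕ) (c : ℕ → ℕ) (v : ℕ) : ℕ :=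
  sInf {k | ∃ x : ℕ → ℕ, IsRepr n c v x ∧ ∑ i ∈ Finset.Icc 1 n, x i = k}

/-- Number of coins used by the greedy algorithm to pay `v`. -/
def grd (n : ℕ) (c : ℕ → ℕ) (v : ℕ) : ℕ :=
  if hv : v = 0 then 0
  else
    let m := ((Finset.Icc 1 n).filter (fun i => c i ≤ v)).sup c
    if hm : 0 < m then grd n c (v - m) + 1 else 0
termination_by v
decreasing_by omega

/-- The system is canonical: greedy is optimal for every positive value. -/
def Canonical (n : ℕ) (c : ℕ → ℕ) : Prop :=
  ∀ v, 0 < v → opt n c v = grd n c v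

/-- `w` is a counterexample to the system. -/
def IsCex (n : ℕ) (c : ℕ → ℕ) (w : ℕ) : Prop :=
  0 < w ∧ opt n c w < grd n c w

/-- `w` is the minimum counterexample to the system. -/
def MinCex (n : ℕ) (c : ℕ → ℕ) (w : ℕ) : Prop :=
  IsCex n c w ∧ ∀ u, IsCex n c u → w ≤ u

/-- A (currency) system: first coin is `1` and coins strictly increase. -/
def IsSystem (n : ℕ) (c : ℕ → ℕ) : Prop :=
  c 1 = 1 ∧ StrictMonoOn c (Set.Icc 1 n)

/-! ### Auxiliary lemmas -/

lemma grd_zero (N : ℕ) (c : ℕ → ℕ) : grd N c 0 = 0 := by rw [grd]; simp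

lemma grd_step {N : ℕ} {c : ℕ → ℕ} {v : ℕ} (hN : 1 ≤ N)
    (hmax : ∀ i ∈ Finset.Icc 1 N, c i ≤ c N) (hpos : 0 < c N) (hv : c N ≤ v) :
    grd N c v = grd N c (v - c N) + 1 := by
  have hv0 : v ≠ 0 := by omega
  have hsup : ((Finset.Icc 1 N).filter (fun i => c i ≤ v)).sup c = c N := by
    apply le_antisymm
    · exact Finset.sup_le fun i hi => hmax i (Finset.mem_filter.1 hi).1
    · exact Finset.le_sup (Finset.mem_filter.2 ⟨Finset.mem_Icc.2 ⟨hN, le_refl N⟩, hv⟩)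
  rw [grd]
  simp only [hv0, dite_false, hsup, hpos, dite_true]

lemma grd_of_lt {k : ℕ} {c : ℕ → ℕ} : ∀ v : ℕ, v < c (k+1) → grd (k+1) c v = grd k c v := by
  intro v
  induction v using Nat.strong_induction_on with
  | _ v ih =>
    intro hv
    rcases Nat.eq_zero_or_pos v with rfl | hv0
    · rw [grd_zero, grd_zero]
    have hfil : (Finset.Icc 1 (k+1)).filter (fun i => c i ≤ v) =
        (Finset.Icc 1 k).filter (fun i => c i ≤ v) := by
      apply Finset.ext
      intro i
      simp only [Finset.mem_filter, Finset.mem_Icc]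
      constructor
      · rintro ⟨⟨h1, h2⟩, h3⟩
        refine ⟨⟨h1, ?_⟩, h3⟩
        rcases Nat.lt_or_ge i (k+1) with h | h
        · omega
        · have : i = k + 1 := by omega
          subst this; omega
      · rintro ⟨⟨h1, h2⟩, h3⟩; exact ⟨⟨h1, by omega⟩, h3⟩
    have hv0' : v ≠ 0 := by omega
    rw [grd, grd]
    simp only [hv0', dite_false, hfil]
    set M := ((Finset.Icc 1 k).filter (fun i => c i ≤ v)).sup c with hM
    by_cases hMp : 0 < M
    · simp only [hMp, dite_true]
      congr 1
      exact ih (v - M) (by omega) (by omega)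
    · simp only [hMp, dite_false]

lemma grd_mul_add {k : ℕ} {c : ℕ → ℕ} (hk : 1 ≤ k)
    (hmax : ∀ i ∈ Finset.Icc 1 k, c i ≤ c k) (hpos : 0 < c k) {w : ℕ} (hw : w < c k) :
    ∀ j : ℕ, grd k c (j * c k + w) = j + grd k c w := by
  intro j
  induction j with
  | zero => simp
  | succ j ih =>
    have hval : c k ≤ (j+1) * c k + w := by rw [add_one_mul]; omega
    rw [grd_step hk hmax hpos hval,
      show (j+1) * c k + w - c k = j * c k + w by rw [add_one_mul]; omega, ih]
    omega

lemma opt_le {N : ℕ} {c : ℕ → ℕ} {v : ℕ} {x : ℕ → ℕ} (hx : IsRepr N c v x) :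
    opt N c v ≤ ∑ i ∈ Finset.Icc 1 N, x i :=
  Nat.sInf_le ⟨x, hx, rfl⟩

lemma opt_zero (N : ℕ) (c : ℕ → ℕ) : opt N c 0 = 0 :=
  Nat.le_zero.1 (by simpa using opt_le (x := fun _ => 0) (by simp [IsRepr]))

lemma single_repr {N : ℕ} {c : ℕ → ℕ} {j : ℕ} (hj : j ∈ Finset.Icc 1 N) (t : ℕ) :
    IsRepr N c (c j * t) (fun i => if i = j then t else 0) := by
  unfold IsRepr
  rw [Finset.sum_congr rfl (fun i _ => by by_cases h : i = j <;> simp [h] :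
    ∀ i ∈ Finset.Icc 1 N, c i * (if i = j then t else 0) = if i = j then c j * t else 0)]
  rw [Finset.sum_ite_eq' (Finset.Icc 1 N) j (fun _ => c j * t)]
  simp [hj]

lemma single_repr_count {N : ℕ} {j : ℕ} (hj : j ∈ Finset.Icc 1 N) (t : ℕ) :
    ∑ i ∈ Finset.Icc 1 N, (if i = j then t else 0) = t := by
  rw [Finset.sum_ite_eq' (Finset.Icc 1 N) j (fun _ => t)]; simp [hj]

lemma opt_spec {N : ℕ} {c : ℕ → ℕ} (h1 : c 1 = 1) (hN : 1 ≤ N) (v : ℕ) :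
    ∃ x, IsRepr N c v x ∧ ∑ i ∈ Finset.Icc 1 N, x i = opt N c v := by
  have hne : {k | ∃ x : ℕ → ℕ, IsRepr N c v x ∧ ∑ i ∈ Finset.Icc 1 N, x i = k}.Nonempty := by
    refine ⟨_, (fun i => if i = 1 then v else 0), ?_, rfl⟩
    have := single_repr (c := c) (Finset.mem_Icc.2 ⟨le_refl 1, hN⟩) v
    rwa [h1, one_mul] at this
  exact Nat.sInf_mem hne

lemma opt_coin {N : ℕ} {c : ℕ → ℕ} {j : ℕ} (hj : j ∈ Finset.Icc 1 N) : opt N c (c j) ≤ 1 := by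
  have h := opt_le (single_repr (c := c) hj 1)
  rw [mul_one] at h
  calc opt N c (c j) ≤ _ := h
    _ = 1 := single_repr_count (j := j) hj 1

lemma opt_add_le {N : ℕ} {c : ℕ → ℕ} (h1 : c 1 = 1) (hN : 1 ≤ N) (u v : ℕ) :
    opt N c (u + v) ≤ opt N c u + opt N c v := by
  obtain ⟨x, hx, hxs⟩ := opt_spec h1 hN u
  obtain ⟨y, hy, hys⟩ := opt_spec h1 hN v
  have : IsRepr N c (u + v) (fun i => x i + y i) := by
    unfold IsRepr at *
    simp only [Nat.mul_add, Finset.sum_add_distrib, hx, hy]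
  calc opt N c (u+v) ≤ _ := opt_le this
    _ = _ := by rw [Finset.sum_add_distrib, hxs, hys]

lemma sum_top (k : ℕ) (f : ℕ → ℕ) :
    ∑ i ∈ Finset.Icc 1 (k+1), f i = (∑ i ∈ Finset.Icc 1 k, f i) + f (k+1) :=
  Finset.sum_Icc_succ_top (by omega) f

lemma opt_mono {k : ℕ} {c : ℕ → ℕ} (h1 : c 1 = 1) (hk : 1 ≤ k) (v : ℕ) :
    opt (k+1) c v ≤ opt k c v := by
  obtain ⟨x, hx, hxs⟩ := opt_spec h1 hk v
  set x' : ℕ → ℕ := fun i => if i = k+1 then 0 else x i with hx'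
  have hrep : IsRepr (k+1) c v x' := by
    unfold IsRepr at *
    rw [sum_top]
    simp only [hx', if_pos rfl, mul_zero, add_zero]
    rw [Finset.sum_congr rfl fun i hi => by
      rw [if_neg (by have := Finset.mem_Icc.1 hi; omega)]]
    exact hx
  calc opt (k+1) c v ≤ _ := opt_le hrep
    _ = opt k c v := by
        rw [sum_top]
        simp only [hx', if_pos rfl, add_zero]
        rw [Finset.sum_congr rfl fun i hi => by
          rw [if_neg (by have := Finset.mem_Icc.1 hi; omega)]]
        exact hxs

lemma opt_of_lt {k : ℕ} {c : ℕ → ℕ} (h1 : c 1 = 1) (hk : 1 ≤ k) {v : ℕ}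
    (hv : v < c (k+1)) : opt (k+1) c v = opt k c v := by
  refine le_antisymm (opt_mono h1 hk v) ?_
  obtain ⟨x, hx, hxs⟩ := opt_spec h1 (by omega : 1 ≤ k+1) v
  have hx0 : x (k+1) = 0 := by
    by_contra h
    have h1' : c (k+1) ≤ c (k+1) * x (k+1) := Nat.le_mul_of_pos_right _ (by omega)
    have h2 : c (k+1) * x (k+1) ≤ v := by
      rw [← hx]
      unfold IsRepr at hx
      rw [sum_top]
      omega
    omega
  have hrep : IsRepr k c v x := by
    unfold IsRepr at *
    rw [sum_top, hx0, mul_zero, add_zero] at hx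
    exact hx
  calc opt k c v ≤ _ := opt_le hrep
    _ = opt (k+1) c v := by rw [← hxs, sum_top, hx0, add_zero]

lemma opt_sub_coin {k : ℕ} {c : ℕ → ℕ} (h1 : c 1 = 1) {v : ℕ}
    (hv : c (k+1) ≤ v) : opt (k+1) c v ≤ opt (k+1) c (v - c (k+1)) + 1 := by
  obtain ⟨x, hx, hxs⟩ := opt_spec h1 (by omega : 1 ≤ k+1) (v - c (k+1))
  set x' : ℕ → ℕ := fun i => if i = k+1 then x i + 1 else x i with hx'
  have hrep : IsRepr (k+1) c v x' := by
    unfold IsRepr at *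
    rw [sum_top]
    simp only [hx', if_pos rfl]
    rw [Finset.sum_congr rfl fun i hi => by
      rw [if_neg (by have := Finset.mem_Icc.1 hi; omega)]]
    rw [sum_top] at hx
    rw [Nat.mul_add, mul_one]
    omega
  calc opt (k+1) c v ≤ _ := opt_le hrep
    _ = _ := by
        rw [sum_top]
        simp only [hx', if_pos rfl]
        rw [Finset.sum_congr rfl fun i hi => by
          rw [if_neg (by have := Finset.mem_Icc.1 hi; omega)]]
        rw [← hxs, sum_top]
        have hee : (Finset.Icc 1 k).sum x = ∑ i ∈ Finset.Icc 1 k, x i := rfl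
        omega

lemma opt_ge_cases {k : ℕ} {c : ℕ → ℕ} (h1 : c 1 = 1) {v : ℕ}
    (hv : c (k+1) ≤ v)
    (hK : opt (k+1) c (v - c (k+1)) + 1 ≤ opt k c v) :
    opt (k+1) c (v - c (k+1)) + 1 ≤ opt (k+1) c v := by
  obtain ⟨x, hx, hxs⟩ := opt_spec h1 (by omega : 1 ≤ k+1) v
  rcases Nat.eq_zero_or_pos (x (k+1)) with h0 | hpos
  · have hrep : IsRepr k c v x := by
      unfold IsRepr at *
      rw [sum_top, h0, mul_zero, add_zero] at hx
      exact hx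
    have : opt k c v ≤ opt (k+1) c v := by
      calc opt k c v ≤ _ := opt_le hrep
        _ = opt (k+1) c v := by rw [← hxs, sum_top, h0, add_zero]
    omega
  · set x' : ℕ → ℕ := fun i => if i = k+1 then x i - 1 else x i with hx'
    have hrep : IsRepr (k+1) c (v - c (k+1)) x' := by
      unfold IsRepr at *
      rw [sum_top]
      simp only [hx', if_pos rfl]
      rw [Finset.sum_congr rfl fun i hi => by
        rw [if_neg (by have := Finset.mem_Icc.1 hi; omega)]]
      rw [sum_top] at hx
      have : c (k+1) * (x (k+1) - 1) + c (k+1) = c (k+1) * x (k+1) := by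
        rw [Nat.mul_sub, mul_one]
        have : c (k+1) ≤ c (k+1) * x (k+1) := Nat.le_mul_of_pos_right _ hpos
        omega
      omega
    have h2 : opt (k+1) c (v - c (k+1)) ≤ opt (k+1) c v - 1 := by
      calc opt (k+1) c (v - c (k+1)) ≤ _ := opt_le hrep
        _ ≤ opt (k+1) c v - 1 := by
            rw [← hxs, sum_top, sum_top]
            simp only [hx', if_pos rfl]
            rw [Finset.sum_congr rfl fun i hi => by
              rw [if_neg (by have := Finset.mem_Icc.1 hi; omega)]]
            have hee : (Finset.Icc 1 k).sum x = ∑ i ∈ Finset.Icc 1 k, x i := rfl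
            omega
    have h3 : 1 ≤ opt (k+1) c v := by
      rw [← hxs, sum_top]
      omega
    omega

/-- One-point theorem (opt = grd form). -/
theorem one_point_theorem_opt (n : ℕ) (c : ℕ → ℕ) (hn : 2 ≤ n)
    (hsys : IsSystem n c) (hsub : Canonical (n - 1) c)
    (m : ℕ) (hm : m = (c n + c (n - 1) - 1) / c (n - 1)) :
    Canonical n c ↔ opt n c (m * c (n - 1)) = grd n c (m * c (n - 1)) := by
  obtain ⟨k, rfl⟩ : ∃ k, n = k + 1 := ⟨n - 1, by omega⟩
  simp only [Nat.add_sub_cancel] at hsub hm ⊢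
  obtain ⟨h1, hmono⟩ := hsys
  have hk : 1 ≤ k := by omega
  -- basic facts about the coins
  have hmem : ∀ i, 1 ≤ i → i ≤ k + 1 → i ∈ Set.Icc 1 (k+1) := fun i h h' => ⟨h, h'⟩
  have hab : c k < c (k+1) := hmono (hmem k hk (by omega)) (hmem (k+1) (by omega) le_rfl) (by omega)
  have ha1 : 1 ≤ c k := by
    rcases eq_or_lt_of_le hk with h | h
    · rw [← h, h1]
    · have := hmono (hmem 1 le_rfl (by omega)) (hmem k hk (by omega)) h
      omega
  have hmaxk : ∀ i ∈ Finset.Icc 1 k, c i ≤ c k := by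
    intro i hi
    have hi' := Finset.mem_Icc.1 hi
    rcases eq_or_lt_of_le hi'.2 with h | h
    · rw [h]
    · exact le_of_lt (hmono (hmem i hi'.1 (by omega)) (hmem k hk (by omega)) h)
  have hmaxk1 : ∀ i ∈ Finset.Icc 1 (k+1), c i ≤ c (k+1) := by
    intro i hi
    have hi' := Finset.mem_Icc.1 hi
    rcases eq_or_lt_of_le hi'.2 with h | h
    · rw [h]
    · exact le_of_lt (hmono (hmem i hi'.1 (by omega)) (hmem (k+1) (by omega) le_rfl) h)
  have hsub' : ∀ u, opt k c u = grd k c u := by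
    intro u
    rcases Nat.eq_zero_or_pos u with rfl | hu
    · rw [opt_zero, grd_zero]
    · exact hsub u hu
  -- bounds on m
  have hdiv1 : m * c k ≤ c (k+1) + c k - 1 := by
    rw [hm]; exact Nat.div_mul_le_self _ _
  have hdiv2 : c (k+1) ≤ m * c k := by
    have h := (Nat.div_lt_iff_lt_mul (by omega : 0 < c k)).1
      (show (c (k+1) + c k - 1) / c k < m + 1 by omega)
    rw [add_one_mul] at h
    omega
  have hm2 : 2 ≤ m := by
    by_contra h
    push_neg at h
    interval_cases m <;> omega
  obtain ⟨j, rfl⟩ : ∃ j, m = j + 2 := ⟨m - 2, by omega⟩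
  have hexp : (j + 2) * c k = j * c k + c k + c k := by ring
  have hexp1 : (j + 1) * c k = j * c k + c k := by ring
  -- s := (j+2) * c k - c (k+1)
  set s := (j + 2) * c k - c (k+1) with hsdef
  have hs : c (k+1) + s = (j + 2) * c k := by omega
  have hslt : s < c k := by omega
  have hq0 : 0 < (j + 2) * c k := by omega
  constructor
  · intro hcan
    exact hcan _ hq0
  · intro hq
    -- derive the key hypothesis H : grd k c s + 1 ≤ j + 2
    have hgq : grd (k+1) c ((j+2) * c k) = grd (k+1) c s + 1 := by
      rw [grd_step (by omega) hmaxk1 (by omega) (by omega)]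
    have hgs : grd (k+1) c s = grd k c s := grd_of_lt s (by omega)
    have hoq : opt (k+1) c ((j+2) * c k) ≤ j + 2 := by
      have hr := opt_le (single_repr (c := c) (N := k+1)
        (Finset.mem_Icc.2 ⟨hk, by omega⟩) (j+2))
      rw [mul_comm (c k) (j+2)] at hr
      calc opt (k+1) c ((j+2) * c k) ≤ _ := hr
        _ = j + 2 := single_repr_count (Finset.mem_Icc.2 ⟨hk, by omega⟩) (j+2)
    have H : grd k c s + 1 ≤ j + 2 := by
      rw [hq, hgq, hgs] at hoq
      omega
    -- key lemma KK
    have KK : ∀ v, c (k+1) ≤ v → opt (k+1) c (v - c (k+1)) + 1 ≤ opt k c v := by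
      intro v
      induction v using Nat.strong_induction_on with
      | _ v ih =>
        intro hbv
        have hav : c k ≤ v := by omega
        have e1 : opt k c v = opt k c (v - c k) + 1 := by
          rw [hsub' v, grd_step hk hmaxk (by omega) hav, hsub' (v - c k)]
        suffices hsuf : opt (k+1) c (v - c (k+1)) ≤ opt k c (v - c k) by omega
        by_cases hbig : c k + c (k+1) ≤ v
        · -- large case: recurse
          have hIH := ih (v - c k) (by omega) (by omega)
          have hadd := opt_add_le h1 (by omega : 1 ≤ k+1) (c k) (v - c (k+1) - c k)
          rw [show c k + (v - c (k+1) - c k) = v - c (k+1) by omega] at hadd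
          have hcoin : opt (k+1) c (c k) ≤ 1 := opt_coin (Finset.mem_Icc.2 ⟨hk, by omega⟩)
          rw [show v - c (k+1) - c k = v - c k - c (k+1) by omega] at hadd
          omega
        · -- medium case: c (k+1) ≤ v < c k + c (k+1)
          set r := v - c (k+1) with hrdef
          have hrlt : r < c k := by omega
          by_cases hrs : r < s
          · -- subcase r < s
            set w := c k - s + r with hwdef
            have hwlt : w < c k := by omega
            have e3 : v - c k = j * c k + w := by omega
            have e4 : opt k c (v - c k) = j + opt k c w := by
              rw [e3, hsub', grd_mul_add hk hmaxk (by omega) hwlt j, hsub' w]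
            have e5 : grd k c (c k + r) = grd k c r + 1 := by
              rw [grd_step hk hmaxk (by omega) (by omega)]
              congr 2
              omega
            have e6 := opt_add_le h1 hk w s
            rw [show w + s = c k + r by omega] at e6
            have e7 : opt k c (c k + r) = grd k c (c k + r) := hsub' _
            have e8 : opt k c r = grd k c r := hsub' r
            have e9 : opt k c s = grd k c s := hsub' s
            have e10 : opt (k+1) c r ≤ opt k c r := opt_mono h1 hk r
            omega
          · -- subcase s ≤ r
            have e3 : v - c k = (j+1) * c k + (r - s) := by omega
            have e4 : opt k c (v - c k) = (j+1) + opt k c (r - s) := by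
              rw [e3, hsub', grd_mul_add hk hmaxk (by omega) (by omega : r - s < c k) (j+1),
                hsub' (r - s)]
            have e5 := opt_add_le h1 (by omega : 1 ≤ k+1) s (r - s)
            rw [show s + (r - s) = r by omega] at e5
            have e6 : opt (k+1) c s ≤ opt k c s := opt_mono h1 hk s
            have e7 : opt (k+1) c (r - s) ≤ opt k c (r - s) := opt_mono h1 hk (r - s)
            have e8 : opt k c s = grd k c s := hsub' s
            omega
    -- main: canonical by strong induction
    intro v hv
    clear hq hgq hgs hoq
    induction v using Nat.strong_induction_on with
    | _ v ih =>
      by_cases hvb : v < c (k+1)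
      · rw [opt_of_lt h1 hk hvb, grd_of_lt v hvb]
        exact hsub' v
      · push_neg at hvb
        have hgstep : grd (k+1) c v = grd (k+1) c (v - c (k+1)) + 1 :=
          grd_step (by omega) hmaxk1 (by omega) hvb
        have hrec : opt (k+1) c (v - c (k+1)) = grd (k+1) c (v - c (k+1)) := by
          rcases Nat.eq_zero_or_pos (v - c (k+1)) with h0 | hpos
          · rw [h0, opt_zero, grd_zero]
          · exact ih (v - c (k+1)) (by omega) hpos
        have hup : opt (k+1) c v ≤ opt (k+1) c (v - c (k+1)) + 1 := opt_sub_coin h1 hvb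
        have hlow : opt (k+1) c (v - c (k+1)) + 1 ≤ opt (k+1) c v :=
          opt_ge_cases h1 hvb (KK v hvb)
        omega
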